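/- The class of subgroup separable groups is closed under free products: if A and B are subgroup separable groups, then the free product A * B is subgroup separable. -/

import Mathlib

/-- A group is subgroup separable (LERF) if every finitely generated subgroup
can be separated from any element outside it in a finite quotient. -/
def SubgroupSeparable (G : Type) [Group G] : Prop :=
  ∀ K : Subgroup G, K.FG → ∀ g : G, g ∉ K →
    ∃ (Q : Type) (_ : Group Q) (_ : Finite Q) (φ : G →* Q),
      Function.Surjective φ ∧ φ g ∉ K.map φ


/-- Separate finitely many elements from a f.g. subgroup simultaneously. -/
lemma sep_finset {A : Type} [Group A] (hA : SubgroupSeparable A) (H : Subgroup A)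
    (hH : H.FG) (s : Finset A) (hs : ∀ x ∈ s, x ∉ H) :
    ∃ (Q : Type) (_ : Group Q) (_ : Finite Q) (φ : A →* Q), ∀ x ∈ s, φ x ∉ H.map φ := by
  classical
  induction s using Finset.induction with
  | empty => exact ⟨PUnit, inferInstance, inferInstance, 1, by simp⟩
  | @insert a s ha ih =>
    obtain ⟨Q₁, _, _, φ₁, _, h₁⟩ := hA H hH a (hs a (Finset.mem_insert_self a s))
    obtain ⟨Q₂, _, _, φ₂, h₂⟩ := ih (fun x hx => hs x (Finset.mem_insert_of_mem hx))
    refine ⟨Q₁ × Q₂, inferInstance, inferInstance, φ₁.prod φ₂, ?_⟩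
    rintro x hx ⟨h, hh, hmap⟩
    rcases Finset.mem_insert.mp hx with rfl | hx'
    · exact h₁ ⟨h, hh, congrArg Prod.fst hmap⟩
    · exact h₂ x hx' ⟨h, hh, congrArg Prod.snd hmap⟩


/-- Action form: a finite `A`-set with a point whose stabilizer contains `H`
but is moved by each element of `s`. -/
lemma sep_action {A : Type} [Group A] (hA : SubgroupSeparable A) (H : Subgroup A)
    (hH : H.FG) (s : Finset A) (hs : ∀ x ∈ s, x ∉ H) :
    ∃ (Y : Type) (_ : Finite Y) (α : A →* Equiv.Perm Y) (y₀ : Y),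
      (∀ h ∈ H, α h y₀ = y₀) ∧ ∀ x ∈ s, α x y₀ ≠ y₀ := by
  obtain ⟨Q, _, _, φ, hφ⟩ := sep_finset hA H hH s hs
  refine ⟨Q ⧸ (H.map φ), inferInstance,
    (MulAction.toPermHom Q (Q ⧸ (H.map φ))).comp φ, ((1 : Q) : Q ⧸ (H.map φ)), ?_, ?_⟩
  · intro h hh
    show (QuotientGroup.mk (φ h * 1) : Q ⧸ (H.map φ)) = QuotientGroup.mk 1
    rw [QuotientGroup.eq]
    simpa using Subgroup.mem_map_of_mem φ hh
  · intro x hx hcon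
    apply hφ x hx
    have : (QuotientGroup.mk (φ x * 1) : Q ⧸ (H.map φ)) = QuotientGroup.mk 1 := hcon
    rw [QuotientGroup.eq] at this
    simpa using (H.map φ).inv_mem_iff.mp (by simpa using this)


/-- Extend a compatible pair of injections into equal-cardinality finite types to an equiv. -/
lemma exists_equiv_extend {W X Y : Type} [Fintype X] [Fintype Y] [DecidableEq X] [DecidableEq Y]
    (hcard : Fintype.card X = Fintype.card Y)
    (f : W → X) (g : W → Y) (hf : Function.Injective f) (hg : Function.Injective g) :
    ∃ e : X ≃ Y, ∀ w, e (f w) = g w := by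
  classical
  set S : Set X := Set.range f with hS
  set T : Set Y := Set.range g with hT
  let e₁ : S ≃ T := (Equiv.ofInjective f hf).symm.trans (Equiv.ofInjective g hg)
  have hcompl : Fintype.card (↥Sᶜ) = Fintype.card (↥Tᶜ) := by
    have h1 := Fintype.card_compl_set S
    have h2 := Fintype.card_compl_set T
    have hST : Fintype.card S = Fintype.card T := Fintype.card_congr e₁
    have hle1 : Fintype.card S ≤ Fintype.card X := Fintype.card_le_of_injective _ Subtype.val_injective
    have hle2 : Fintype.card T ≤ Fintype.card Y := Fintype.card_le_of_injective _ Subtype.val_injective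
    omega
  have e₂ : (↥Sᶜ) ≃ (↥Tᶜ) := Fintype.equivOfCardEq hcompl
  refine ⟨(Equiv.Set.sumCompl S).symm.trans ((e₁.sumCongr e₂).trans (Equiv.Set.sumCompl T)), ?_⟩
  intro w
  have h1 : (Equiv.Set.sumCompl S).symm (f w) = Sum.inl ⟨f w, ⟨w, rfl⟩⟩ :=
    Equiv.Set.sumCompl_symm_apply_of_mem (Set.mem_range_self w)
  simp only [Equiv.trans_apply, h1, Equiv.sumCongr_apply, Sum.map_inl, Equiv.Set.sumCompl_apply_inl]
  show ((e₁ ⟨f w, _⟩ : T) : Y) = g w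
  have h2 : (⟨f w, ⟨w, rfl⟩⟩ : S) = Equiv.ofInjective f hf w := by
    apply Subtype.ext; rfl
  rw [h2]
  show ((Equiv.ofInjective g hg) ((Equiv.ofInjective f hf).symm ((Equiv.ofInjective f hf) w)) : Y) = g w
  rw [Equiv.symm_apply_apply]
  rfl

open Relation in
lemma key_extension {A G M : Type} [Group A] [Group G] [MulAction G M]
    (hA : SubgroupSeparable A) (σ : A →* G) (V : Finset M) (T : Finset (A × M))
    (hT : ∀ p ∈ T, p.2 ∈ V ∧ σ p.1 • p.2 ∈ V) :
    ∃ (X : Type) (_ : Finite X) (α : A →* Equiv.Perm X) (π : M → X),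
      Set.InjOn π ↑V ∧ ∀ p ∈ T, π (σ p.1 • p.2) = α p.1 (π p.2) := by
  classical
  let W := {m : M // m ∈ V}
  let r : W → W → Prop := fun v w => ∃ a : A, (a, v.1) ∈ T ∧ σ a • v.1 = w.1
  let s : Setoid W := EqvGen.setoid r
  let C := Quotient s
  -- path products
  have pathEx : ∀ v w : W, EqvGen r v w → ∃ b : A, σ b • v.1 = w.1 := by
    intro v w h
    induction h with
    | rel x y hxy => obtain ⟨a, _, ha⟩ := hxy; exact ⟨a, ha⟩
    | refl x => exact ⟨1, by simp⟩
    | symm x y _ ih => obtain ⟨b, hb⟩ := ih; exact ⟨b⁻¹, by rw [map_inv, inv_smul_eq_iff, hb]⟩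
    | trans x y z _ _ ih1 ih2 =>
        obtain ⟨b, hb⟩ := ih1; obtain ⟨b', hb'⟩ := ih2
        exact ⟨b' * b, by rw [map_mul, mul_smul, hb, hb']⟩
  have repEquiv : ∀ v : W, EqvGen r (Quotient.mk s v).out v := fun v =>
    Quotient.exact (Quotient.out_eq (Quotient.mk s v))
  let bb : W → A := fun v => (pathEx _ _ (repEquiv v)).choose
  have hbb : ∀ v : W, σ (bb v) • ((Quotient.mk s v).out : W).1 = v.1 := fun v =>
    (pathEx _ _ (repEquiv v)).choose_spec
  have hbbc : ∀ (v : W) (c : C), Quotient.mk s v = c → σ (bb v) • ((c.out : W).1 : M) = v.1 := by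
    intro v c hc; have := hbb v; rwa [hc] at this
  -- edges
  let vO : (t : A × M) → t ∈ T → W := fun t ht => ⟨t.2, (hT t ht).1⟩
  let wO : (t : A × M) → t ∈ T → W := fun t ht => ⟨σ t.1 • t.2, (hT t ht).2⟩
  have edgeClass : ∀ t (ht : t ∈ T), Quotient.mk s (vO t ht) = Quotient.mk s (wO t ht) :=
    fun t ht => Quotient.sound (EqvGen.rel _ _ ⟨t.1, ht, rfl⟩)
  -- generators per class
  let F : {t // t ∈ T} → A := fun t => (bb (wO t.1 t.2))⁻¹ * t.1.1 * bb (vO t.1 t.2)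
  let Sgen : C → Finset A := fun c =>
    (T.attach.filter (fun t => Quotient.mk s (vO t.1 t.2) = c)).image F
  let H₀ : C → Subgroup A := fun c => Subgroup.closure ↑(Sgen c)
  have hfg : ∀ c, (H₀ c).FG := fun c =>
    (Subgroup.fg_iff _).2 ⟨↑(Sgen c), rfl, (Sgen c).finite_toSet⟩
  have hstab : ∀ c, ∀ x ∈ H₀ c, σ x • ((c.out : W).1 : M) = (c.out : W).1 := by
    intro c
    have : H₀ c ≤ (MulAction.stabilizer G ((c.out : W).1 : M)).comap σ := by
      rw [Subgroup.closure_le]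
      intro x hx
      simp only [Sgen, Finset.coe_image, Set.mem_image, Finset.mem_coe, Finset.mem_filter] at hx
      obtain ⟨t, ⟨-, hcl⟩, rfl⟩ := hx
      have hw : Quotient.mk s (wO t.1 t.2) = c := (edgeClass t.1 t.2).symm.trans hcl
      have h1 : σ (bb (vO t.1 t.2)) • ((c.out : W).1 : M) = (vO t.1 t.2).1 := hbbc _ _ hcl
      have h2 : σ (bb (wO t.1 t.2)) • ((c.out : W).1 : M) = (wO t.1 t.2).1 := hbbc _ _ hw
      rw [SetLike.mem_coe, Subgroup.mem_comap, MulAction.mem_stabilizer_iff]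
      show σ ((bb (wO t.1 t.2))⁻¹ * t.1.1 * bb (vO t.1 t.2)) • ((c.out : W).1 : M) = _
      rw [map_mul, map_mul, mul_smul, mul_smul, h1, map_inv,
        show σ t.1.1 • (vO t.1 t.2).1 = (wO t.1 t.2).1 from rfl, inv_smul_eq_iff, h2]
    intro x hx
    exact MulAction.mem_stabilizer_iff.1 (Subgroup.mem_comap.1 (this hx))
  -- separation elements per class
  let D : C → Finset A := fun c => ((Finset.univ : Finset (W × W)).filter
      (fun p => Quotient.mk s p.1 = c ∧ Quotient.mk s p.2 = c ∧ p.1 ≠ p.2)).image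
      (fun p => (bb p.2)⁻¹ * bb p.1)
  have hD : ∀ c, ∀ x ∈ D c, x ∉ H₀ c := by
    intro c x hx hmem
    simp only [D, Finset.mem_image, Finset.mem_filter] at hx
    obtain ⟨⟨v, w⟩, ⟨-, hv, hw, hne⟩, rfl⟩ := hx
    have h1 : σ (bb v) • ((c.out : W).1 : M) = v.1 := hbbc _ _ hv
    have h2 : σ (bb w) • ((c.out : W).1 : M) = w.1 := hbbc _ _ hw
    have h3 := hstab c _ hmem
    rw [map_mul, mul_smul, h1, map_inv, inv_smul_eq_iff, h2] at h3
    exact hne (Subtype.ext h3)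
  -- separating finite actions per class
  have hsep : ∀ c : C, ∃ (Y : Type) (_ : Finite Y) (α : A →* Equiv.Perm Y) (y₀ : Y),
      (∀ h ∈ H₀ c, α h y₀ = y₀) ∧ ∀ x ∈ D c, α x y₀ ≠ y₀ :=
    fun c => sep_action hA (H₀ c) (hfg c) (D c) (hD c)
  choose Y finY α y₀ hfix hmove using hsep
  haveI : ∀ c, Finite (Y c) := finY
  -- the global finite A-set
  let pnt : (c : C) → A → Y c := fun c a => α c a (y₀ c)
  let X := (Σ c : C, Y c) ⊕ PUnit
  haveI : Finite W := inferInstance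
  haveI : Finite C := Quotient.finite _
  haveI : Finite X := inferInstance
  let αsig : A →* Equiv.Perm (Σ c : C, Y c) :=
    (Equiv.Perm.sigmaCongrRightHom (fun c => Y c)).comp (MonoidHom.mk' (fun a c => α c a)
      (by intro a b; funext c; simp [map_mul]))
  let αX : A →* Equiv.Perm X := (Equiv.Perm.sumCongrHom _ _).comp (αsig.prod 1)
  have hαX : ∀ (a : A) (c : C) (y : Y c), αX a (Sum.inl ⟨c, y⟩) = Sum.inl ⟨c, α c a y⟩ :=
    fun a c y => rfl
  let π : M → X := fun m => if h : m ∈ V then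
    Sum.inl ⟨Quotient.mk s ⟨m, h⟩, pnt (Quotient.mk s ⟨m, h⟩) (bb ⟨m, h⟩)⟩ else Sum.inr PUnit.unit
  refine ⟨X, inferInstance, αX, π, ?_, ?_⟩
  · -- injectivity on V
    intro m₁ hm₁ m₂ hm₂ heq
    simp only [Finset.mem_coe] at hm₁ hm₂
    simp only [π, dif_pos hm₁, dif_pos hm₂] at heq
    set v := (⟨m₁, hm₁⟩ : W)
    set w := (⟨m₂, hm₂⟩ : W)
    have heq' := Sum.inl.inj heq
    have hc : Quotient.mk s v = Quotient.mk s w := congrArg Sigma.fst heq'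
    have hy : HEq (pnt (Quotient.mk s v) (bb v)) (pnt (Quotient.mk s w) (bb w)) :=
      (Sigma.mk.inj_iff.1 heq').2
    rw [hc] at hy
    have hy' : pnt (Quotient.mk s w) (bb v) = pnt (Quotient.mk s w) (bb w) := eq_of_heq hy
    by_contra hne
    have hvw : v ≠ w := fun h => hne (congrArg Subtype.val h)
    have hxD : (bb w)⁻¹ * bb v ∈ D (Quotient.mk s w) := by
      apply Finset.mem_image.2
      exact ⟨(v, w), Finset.mem_filter.2 ⟨Finset.mem_univ _, hc, rfl, hvw⟩, rfl⟩
    apply hmove _ _ hxD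
    have : α _ (bb w)⁻¹ (pnt (Quotient.mk s w) (bb v)) = α _ (bb w)⁻¹ (pnt _ (bb w)) :=
      congrArg _ hy'
    simp only [pnt, ← Equiv.Perm.mul_apply, ← map_mul] at this ⊢
    rw [this]
    simp [← map_mul]
  · -- edges
    rintro ⟨a, m⟩ ht
    have h1 : m ∈ V := (hT _ ht).1
    have h2 : σ a • m ∈ V := (hT _ ht).2
    set v := (⟨m, h1⟩ : W)
    set w := (⟨σ a • m, h2⟩ : W)
    have hc : Quotient.mk s v = Quotient.mk s w := edgeClass (a, m) ht
    simp only [π, dif_pos h1, dif_pos h2]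
    rw [hαX]
    congr 1
    rw [← hc]
    show (⟨Quotient.mk s v, pnt (Quotient.mk s v) (bb w)⟩ : Σ c, Y c)
      = ⟨Quotient.mk s v, α _ a (pnt _ (bb v))⟩
    congr 1
    have hgen : (bb w)⁻¹ * a * bb v ∈ H₀ (Quotient.mk s v) := by
      apply Subgroup.subset_closure
      refine Finset.mem_image.2 ⟨⟨(a, m), ht⟩, Finset.mem_filter.2 ⟨Finset.mem_attach _ _, rfl⟩, rfl⟩
    have hfix' := hfix _ _ hgen
    simp only [pnt, ← Equiv.Perm.mul_apply, ← map_mul]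
    have : α (Quotient.mk s v) (bb w * ((bb w)⁻¹ * a * bb v)) (y₀ _) = α _ (bb w) (y₀ _) := by
      rw [map_mul, Equiv.Perm.mul_apply, hfix']
    rw [← this]
    congr 2
    group

open Monoid

lemma exists_word {A B : Type} [Group A] [Group B] (x : Monoid.Coprod A B) :
    ∃ l : List (A ⊕ B),
      (l.map (Sum.elim (fun a => (Coprod.inl a : Coprod A B)) (fun b => Coprod.inr b))).prod = x := by
  induction x using Monoid.Coprod.induction_on with
  | inl a => exact ⟨[Sum.inl a], by simp⟩
  | inr b => exact ⟨[Sum.inr b], by simp⟩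
  | mul x y ihx ihy =>
    obtain ⟨l1, h1⟩ := ihx; obtain ⟨l2, h2⟩ := ihy
    exact ⟨l1 ++ l2, by simp [h1, h2]⟩

theorem stmt3 (A B : Type) [Group A] [Group B]
    (hA : SubgroupSeparable A) (hB : SubgroupSeparable B) :
    SubgroupSeparable (Monoid.Coprod A B) := by
  classical
  intro K hK g hg
  obtain ⟨S, hS⟩ := hK
  let ℓ : A ⊕ B → Coprod A B := Sum.elim (fun a => (Coprod.inl a : Coprod A B)) (fun b => Coprod.inr b)
  have hword := fun x : Coprod A B => exists_word (A := A) (B := B) x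
  choose wrd hwrd using hword
  let WS : Finset (List (A ⊕ B)) := insert (wrd g) (S.image wrd)
  let M := Coprod A B ⧸ K
  let cos : List (A ⊕ B) → M := fun l => QuotientGroup.mk ((l.map ℓ).prod)
  let V : Finset M := WS.biUnion (fun l => (l.tails.map cos).toFinset)
  let TA : Finset (A × M) := WS.biUnion (fun l => (l.tails.filterMap (fun t =>
      match t with
      | Sum.inl a :: rest => some (a, cos rest)
      | _ => none)).toFinset)
  let TB : Finset (B × M) := WS.biUnion (fun l => (l.tails.filterMap (fun t =>
      match t with
      | Sum.inr b :: rest => some (b, cos rest)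
      | _ => none)).toFinset)
  -- membership helpers
  have hVmem : ∀ l ∈ WS, ∀ t : List (A ⊕ B), t <:+ l → cos t ∈ V := by
    intro l hl t ht
    exact Finset.mem_biUnion.2 ⟨l, hl, List.mem_toFinset.2 (List.mem_map.2 ⟨t, (List.mem_tails _ _).2 ht, rfl⟩)⟩
  have hTAmem : ∀ l ∈ WS, ∀ (a : A) (rest : List (A ⊕ B)), (Sum.inl a :: rest) <:+ l →
      (a, cos rest) ∈ TA := by
    intro l hl a rest h
    exact Finset.mem_biUnion.2 ⟨l, hl, List.mem_toFinset.2 (List.mem_filterMap.2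
      ⟨Sum.inl a :: rest, (List.mem_tails _ _).2 h, rfl⟩)⟩
  have hTBmem : ∀ l ∈ WS, ∀ (b : B) (rest : List (A ⊕ B)), (Sum.inr b :: rest) <:+ l →
      (b, cos rest) ∈ TB := by
    intro l hl b rest h
    exact Finset.mem_biUnion.2 ⟨l, hl, List.mem_toFinset.2 (List.mem_filterMap.2
      ⟨Sum.inr b :: rest, (List.mem_tails _ _).2 h, rfl⟩)⟩
  have cos_consA : ∀ (a : A) (rest : List (A ⊕ B)),
      cos (Sum.inl a :: rest) = (Coprod.inl a : Coprod A B) • cos rest := by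
    intro a rest
    show QuotientGroup.mk _ = _
    rw [List.map_cons, List.prod_cons]
    rfl
  have cos_consB : ∀ (b : B) (rest : List (A ⊕ B)),
      cos (Sum.inr b :: rest) = (Coprod.inr b : Coprod A B) • cos rest := by
    intro b rest
    show QuotientGroup.mk _ = _
    rw [List.map_cons, List.prod_cons]
    rfl
  have hTAcond : ∀ p ∈ TA, p.2 ∈ V ∧ (Coprod.inl : A →* Coprod A B) p.1 • p.2 ∈ V := by
    rintro ⟨a, m⟩ hp
    obtain ⟨l, hl, hmem⟩ := Finset.mem_biUnion.1 hp
    obtain ⟨t, htl, hmatch⟩ := List.mem_filterMap.1 (List.mem_toFinset.1 hmem)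
    match t, hmatch with
    | Sum.inl a' :: rest, hm =>
      obtain ⟨rfl, rfl⟩ : a' = a ∧ cos rest = m := by
        simpa using Option.some.inj hm
      have hsuf : (Sum.inl a' :: rest) <:+ l := (List.mem_tails _ _).1 htl
      refine ⟨hVmem l hl rest (List.IsSuffix.trans ⟨[Sum.inl a'], rfl⟩ hsuf), ?_⟩
      rw [show (Coprod.inl : A →* Coprod A B) a' • cos rest = cos (Sum.inl a' :: rest) from
        (cos_consA a' rest).symm]
      exact hVmem l hl _ hsuf
  have hTBcond : ∀ p ∈ TB, p.2 ∈ V ∧ (Coprod.inr : B →* Coprod A B) p.1 • p.2 ∈ V := by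
    rintro ⟨b, m⟩ hp
    obtain ⟨l, hl, hmem⟩ := Finset.mem_biUnion.1 hp
    obtain ⟨t, htl, hmatch⟩ := List.mem_filterMap.1 (List.mem_toFinset.1 hmem)
    match t, hmatch with
    | Sum.inr b' :: rest, hm =>
      obtain ⟨rfl, rfl⟩ : b' = b ∧ cos rest = m := by
        simpa using Option.some.inj hm
      have hsuf : (Sum.inr b' :: rest) <:+ l := (List.mem_tails _ _).1 htl
      refine ⟨hVmem l hl rest (List.IsSuffix.trans ⟨[Sum.inr b'], rfl⟩ hsuf), ?_⟩
      rw [show (Coprod.inr : B →* Coprod A B) b' • cos rest = cos (Sum.inr b' :: rest) from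
        (cos_consB b' rest).symm]
      exact hVmem l hl _ hsuf
  -- apply the key extension lemma on both sides
  obtain ⟨XA, finXA, αA, πA, injA, edgeA⟩ :=
    key_extension hA (Coprod.inl : A →* Coprod A B) V TA hTAcond
  obtain ⟨XB, finXB, αB, πB, injB, edgeB⟩ :=
    key_extension hB (Coprod.inr : B →* Coprod A B) V TB hTBcond
  letI : Fintype XA := Fintype.ofFinite XA
  letI : Fintype XB := Fintype.ofFinite XB
  set nA := Fintype.card XA
  set nB := Fintype.card XB
  let XA' := XA ⊕ Fin (max nA nB - nA)
  let XB' := XB ⊕ Fin (max nA nB - nB)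
  let αA' : A →* Equiv.Perm XA' := (Equiv.Perm.sumCongrHom _ _).comp (αA.prod 1)
  let αB' : B →* Equiv.Perm XB' := (Equiv.Perm.sumCongrHom _ _).comp (αB.prod 1)
  let πA' : M → XA' := fun m => Sum.inl (πA m)
  let πB' : M → XB' := fun m => Sum.inl (πB m)
  have hcard : Fintype.card XA' = Fintype.card XB' := by
    simp only [XA', XB', Fintype.card_sum, Fintype.card_fin]
    have h1 : nA ≤ max nA nB := le_max_left _ _
    have h2 : nB ≤ max nA nB := le_max_right _ _
    omega
  have hfinj : Function.Injective (fun w : {m : M // m ∈ V} => πA' w.1) := by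
    intro w1 w2 h
    exact Subtype.ext (injA (Finset.mem_coe.2 w1.2) (Finset.mem_coe.2 w2.2) (Sum.inl.inj h))
  have hginj : Function.Injective (fun w : {m : M // m ∈ V} => πB' w.1) := by
    intro w1 w2 h
    exact Subtype.ext (injB (Finset.mem_coe.2 w1.2) (Finset.mem_coe.2 w2.2) (Sum.inl.inj h))
  obtain ⟨e, he⟩ := exists_equiv_extend hcard _ _ hfinj hginj
  -- transport the B-action to XA'
  let βX : B →* Equiv.Perm XA' := MonoidHom.mk'
    (fun b => (e.trans ((αB' b).trans e.symm) : Equiv.Perm XA'))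
    (by intro b1 b2; ext x; simp [map_mul])
  have heV : ∀ m (hm : m ∈ V), e (πA' m) = πB' m := fun m hm => he ⟨m, hm⟩
  -- the representation
  let ρ : Coprod A B →* Equiv.Perm XA' := Coprod.lift αA' βX
  have hραa : ∀ (a : A), ρ (Coprod.inl a) = αA' a := fun a => Coprod.lift_apply_inl αA' βX a
  have hραb : ∀ (b : B), ρ (Coprod.inr b) = βX b := fun b => Coprod.lift_apply_inr αA' βX b
  -- the path lemma
  have path : ∀ l : List (A ⊕ B), (∃ l₀ ∈ WS, l <:+ l₀) →
      ρ ((l.map ℓ).prod) (πA' (cos [])) = πA' (cos l) := by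
    intro l
    induction l with
    | nil => intro _; simp
    | cons hd rest ih =>
      rintro ⟨l₀, hl₀, hsuf⟩
      have hrest : rest <:+ l₀ := List.IsSuffix.trans ⟨[hd], rfl⟩ hsuf
      have ihr := ih ⟨l₀, hl₀, hrest⟩
      rw [List.map_cons, List.prod_cons, map_mul, Equiv.Perm.mul_apply, ihr]
      cases hd with
      | inl a =>
        have hedge := edgeA (a, cos rest) (hTAmem l₀ hl₀ a rest hsuf)
        show ρ (Coprod.inl a) _ = _
        rw [hραa, cos_consA]
        show αA' a (Sum.inl (πA (cos rest))) = Sum.inl (πA ((Coprod.inl a : Coprod A B) • cos rest))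
        have : αA' a (Sum.inl (πA (cos rest))) = Sum.inl (αA a (πA (cos rest))) := rfl
        rw [this, ← hedge]
      | inr b =>
        have hedge := edgeB (b, cos rest) (hTBmem l₀ hl₀ b rest hsuf)
        have hrV : cos rest ∈ V := hVmem l₀ hl₀ rest (List.IsSuffix.trans ⟨[Sum.inr b], rfl⟩ hsuf)
        have hrV' : cos (Sum.inr b :: rest) ∈ V := hVmem l₀ hl₀ _ hsuf
        show ρ (Coprod.inr b) _ = _
        rw [hραb, cos_consB]
        show e.symm (αB' b (e (πA' (cos rest)))) = πA' ((Coprod.inr b : Coprod A B) • cos rest)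
        rw [heV _ hrV]
        have : αB' b (πB' (cos rest)) = Sum.inl (αB b (πB (cos rest))) := rfl
        rw [this, ← hedge]
        have h2 : (Sum.inl (πB ((Coprod.inr b : Coprod A B) • cos rest)) : XB')
            = πB' ((Coprod.inr b : Coprod A B) • cos rest) := rfl
        rw [h2, ← heV _ (by rw [← cos_consB]; exact hrV'), Equiv.symm_apply_apply]
  -- conclusion
  refine ⟨ρ.range, inferInstance, inferInstance, ρ.rangeRestrict,
    MonoidHom.rangeRestrict_surjective ρ, ?_⟩
  rintro ⟨k, hk, hke⟩
  have hρeq : ρ k = ρ g := by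
    have := congrArg Subtype.val hke
    simpa using this
  -- every element of K fixes the base point
  set pt := πA' (cos []) with hpt
  have hfixK : ∀ x ∈ K, ρ x pt = pt := by
    have hle : Subgroup.closure (↑S : Set (Coprod A B)) ≤
        (MulAction.stabilizer (Equiv.Perm XA') pt).comap ρ := by
      rw [Subgroup.closure_le]
      intro x hx
      rw [SetLike.mem_coe, Subgroup.mem_comap, MulAction.mem_stabilizer_iff]
      have hxK : x ∈ K := by rw [← hS]; exact Subgroup.subset_closure hx
      have hws : wrd x ∈ WS := Finset.mem_insert_of_mem (Finset.mem_image_of_mem wrd hx)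
      have hp := path (wrd x) ⟨wrd x, hws, List.suffix_refl _⟩
      have hp' : ρ x pt = πA' (cos (wrd x)) := by
        conv_lhs => rw [← hwrd x]
        exact hp
      have hcx : cos (wrd x) = cos [] := by
        show QuotientGroup.mk _ = QuotientGroup.mk _
        rw [hwrd x]
        rw [QuotientGroup.eq]
        simpa using K.inv_mem hxK
      show ρ x • pt = pt
      show ρ x pt = pt
      rw [hp', hcx]
    intro x hx
    have := hle (by rw [hS]; exact hx)
    rw [Subgroup.mem_comap, MulAction.mem_stabilizer_iff] at this
    exact this
  have hgmove : ρ g pt ≠ pt := by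
    have hws : wrd g ∈ WS := Finset.mem_insert_self _ _
    have hp := path (wrd g) ⟨wrd g, hws, List.suffix_refl _⟩
    have hp' : ρ g pt = πA' (cos (wrd g)) := by
      conv_lhs => rw [← hwrd g]
      exact hp
    rw [hp']
    intro hcon
    have h1V : cos [] ∈ V := hVmem (wrd g) hws [] (List.nil_suffix)
    have hgV : cos (wrd g) ∈ V := hVmem (wrd g) hws _ (List.suffix_refl _)
    have hcc : cos (wrd g) = cos [] :=
      injA (Finset.mem_coe.2 hgV) (Finset.mem_coe.2 h1V) (Sum.inl.inj hcon)
    have hgK : g ∈ K := by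
      have h0 : (QuotientGroup.mk g : M) = QuotientGroup.mk ((List.map ℓ []).prod) := by
        rw [← hwrd g]; exact hcc
      have h2 := (QuotientGroup.eq).1 h0
      simp only [List.map_nil, List.prod_nil, mul_one] at h2
      exact (by simpa using K.inv_mem h2)
    exact hg hgK
  exact hgmove (by rw [← hρeq, hfixK k hk])
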